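/- For every θ ∈ [0,1] and every integer k ≥ 2, the quantity G₂(θ,k) := e^{θ-1} · [(1-θ/k)^k + θ(1-θ)(1-θ/k)^{k-1}] satisfies G₂(θ,k) ≤ 5/(4e) < 0.46. -/

import Mathlib

set_option maxHeartbeats 2000000 in
theorem stmt5 (θ : ℝ) (hθ : θ ∈ Set.Icc (0:ℝ) 1) (k : ℕ) (hk : 2 ≤ k) :
    Real.exp (θ - 1) * ((1 - θ/k)^k + θ*(1-θ)*(1 - θ/k)^(k-1)) ≤ 5/(4*Real.exp 1)
    ∧ 5/(4*Real.exp 1) < 0.46 := by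
  obtain ⟨h0, h1⟩ := hθ
  have hK2 : (2:ℝ) ≤ (k:ℝ) := by exact_mod_cast hk
  have hKpos : (0:ℝ) < (k:ℝ) := by linarith
  set K : ℝ := (k:ℝ) with hKdef
  set s : ℝ := θ / K with hsdef
  have hKs : K * s = θ := by
    rw [hsdef]; field_simp [hKpos.ne']
  have hs0 : 0 ≤ s := div_nonneg h0 hKpos.le
  have hs2 : s ≤ 1/2 := by
    rw [hsdef, div_le_iff₀ hKpos]; linarith
  have hs1 : 1 - s > 0 := by linarith
  -- polynomial upper bound for exp s
  have hP : Real.exp s ≤ 1 + s + s^2/2 + 2/9*s^3 := by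
    have h := Real.exp_bound' hs0 (by linarith : s ≤ 1) (n := 3) (by norm_num)
    have hsum : (∑ m ∈ Finset.range 3, s ^ m / m.factorial) = 1 + s + s^2/2 := by
      simp [Finset.sum_range_succ, Nat.factorial]
    rw [hsum] at h
    norm_num [Nat.factorial] at h
    linarith [h]
  set a : ℝ := s^2/2 + 5/18*s^3 + 2/9*s^4 with hadef
  have ha0 : 0 ≤ a := by positivity
  have p2 : s^2 ≤ 1/4 := by nlinarith
  have p3 : s^3 ≤ 1/8 := by nlinarith [mul_nonneg hs0 hs0]
  have p4 : s^4 ≤ 1/16 := by nlinarith [mul_nonneg (mul_nonneg hs0 hs0) hs0]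
  have ha1 : a ≤ 1 := by rw [hadef]; linarith
  have hB : Real.exp s * (1 - s) ≤ 1 - a := by
    have h2 : Real.exp s * (1-s) ≤ (1 + s + s^2/2 + 2/9*s^3) * (1-s) :=
      mul_le_mul_of_nonneg_right hP hs1.le
    calc Real.exp s * (1-s) ≤ (1 + s + s^2/2 + 2/9*s^3) * (1-s) := h2
      _ = 1 - a := by rw [hadef]; ring
  have hBpos : 0 ≤ Real.exp s * (1 - s) := by positivity
  -- exp θ = (exp s)^k
  have hexp : Real.exp θ = (Real.exp s)^k := by
    rw [← Real.exp_nat_mul, ← hKdef, hKs]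
  -- power bound
  have pow1 : (Real.exp s * (1-s))^k ≤ (1-a)^k := pow_le_pow_left₀ hBpos hB k
  have pow2 : (1-a)^k * (1 + K*a) ≤ 1 := by
    have hb : (1:ℝ) + (k:ℕ) * a ≤ (1+a)^k := one_add_mul_le_pow (by linarith) k
    have h1a : (1-a)^k * (1+a)^k = (1 - a^2)^k := by
      rw [← mul_pow]; ring_nf
    have h1a2 : (1 - a^2)^k ≤ 1 :=
      pow_le_one₀ (by nlinarith [ha0, ha1]) (by nlinarith [ha0, ha1])
    have hnn : (0:ℝ) ≤ (1-a)^k := pow_nonneg (by linarith) k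
    calc (1-a)^k * (1 + K*a) ≤ (1-a)^k * (1+a)^k := by
          apply mul_le_mul_of_nonneg_left _ hnn
          exact_mod_cast hb
      _ = (1-a^2)^k := h1a
      _ ≤ 1 := h1a2
  have hKa0 : 0 ≤ K * a := by positivity
  have pow3 : (Real.exp s * (1-s))^k ≤ 1 / (1 + K*a) := by
    rw [le_div_iff₀ (by linarith)]
    calc (Real.exp s * (1-s))^k * (1 + K*a) ≤ (1-a)^k * (1 + K*a) := by
          apply mul_le_mul_of_nonneg_right pow1 (by linarith)
      _ ≤ 1 := pow2
  -- key polynomial inequality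
  have hc : θ * (1-θ) = K*s*(1-K*s) := by rw [hKs]
  have hsθ : 2*s ≤ θ := by nlinarith [mul_le_mul_of_nonneg_right hK2 hs0]
  have hKa : K*(s^2/2 + 5/18*s^3 + 2/9*s^4) = θ*(s/2 + 5/18*s^2 + 2/9*s^3) := by
    rw [← hKs]; ring
  have poly : 4 * (1 - s + θ*(1-θ)) ≤ 5 * (1-s) * (1 + K*a) := by
    rw [hadef, hKa]
    have ht : (0:ℝ) ≤ θ - 2*s := by linarith
    have hv : (0:ℝ) ≤ 1 - θ := by linarith
    have hz : (0:ℝ) ≤ (2*θ-1)^2 := sq_nonneg _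
    have hy : (0:ℝ) ≤ (2*θ-1+s)^2 := sq_nonneg _
    have hss : (0:ℝ) ≤ s*s := mul_nonneg hs0 hs0
    have p1 : (0:ℝ) ≤ s*(θ-2*s) := mul_nonneg hs0 ht
    have p2 : (0:ℝ) ≤ s*(θ-2*s)*(θ-2*s) := mul_nonneg p1 ht
    have p3 : (0:ℝ) ≤ s*s*(θ-2*s)*(1-θ) := mul_nonneg (mul_nonneg hss ht) hv
    have p4 : (0:ℝ) ≤ s*s*s*s*(θ-2*s) := mul_nonneg (mul_nonneg (mul_nonneg hss hs0) hs0) ht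
    have p5 : (0:ℝ) ≤ s*s*s*(θ-2*s)*(θ-2*s) :=
      mul_nonneg (mul_nonneg (mul_nonneg hss hs0) ht) ht
    have p6 : (0:ℝ) ≤ s*s*(θ-2*s)*(θ-2*s)*(θ-2*s) :=
      mul_nonneg (mul_nonneg (mul_nonneg hss ht) ht) ht
    have p7 : (0:ℝ) ≤ s*(θ-2*s)*(θ-2*s)*(θ-2*s)*(θ-2*s) :=
      mul_nonneg (mul_nonneg (mul_nonneg p1 ht) ht) ht
    have p8 : (0:ℝ) ≤ (2*θ-1)^2*(1-θ) := mul_nonneg hz hv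
    have p9 : (0:ℝ) ≤ (2*θ-1)^2*(θ-2*s)*(θ-2*s) := mul_nonneg (mul_nonneg hz ht) ht
    have p10 : (0:ℝ) ≤ (2*θ-1)^2*(θ-2*s)*(1-θ) := mul_nonneg (mul_nonneg hz ht) hv
    have p11 : (0:ℝ) ≤ (2*θ-1)^2*(1-θ)*(1-θ) := mul_nonneg p8 hv
    have p12 : (0:ℝ) ≤ (2*θ-1)^2*(s*s)*(1-θ) := mul_nonneg (mul_nonneg hz hss) hv
    have p13 : (0:ℝ) ≤ (2*θ-1)^2*s*(θ-2*s)*(1-θ) :=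
      mul_nonneg (mul_nonneg (mul_nonneg hz hs0) ht) hv
    have p15 : (0:ℝ) ≤ (2*θ-1+s)^2*s := mul_nonneg hy hs0
    have p16 : (0:ℝ) ≤ (2*θ-1+s)^2*(θ-2*s) := mul_nonneg hy ht
    have p17 : (0:ℝ) ≤ (2*θ-1+s)^2*s*(1-θ) := mul_nonneg p15 hv
    linarith [p1,p2,p3,p4,p5,p6,p7,p8,p9,p10,p11,p12,p13,hy,p15,p16,p17]
  -- main bound: exp θ * T ≤ 5/4
  have hpowsplit : (1 - s)^k = (1 - s)^(k-1) * (1-s) := by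
    conv_lhs => rw [show k = (k-1) + 1 by omega]
    rw [pow_succ]
  have hTnn : (0:ℝ) ≤ (1-s)^(k-1) := pow_nonneg (by linarith) _
  have main : Real.exp θ * ((1 - s)^k + θ*(1-θ)*(1 - s)^(k-1)) ≤ 5/4 := by
    have hrw : Real.exp θ * ((1 - s)^k + θ*(1-θ)*(1 - s)^(k-1))
        = (Real.exp s * (1-s))^k * ((1 - s + θ*(1-θ)) / (1-s)) := by
      rw [hexp, mul_pow, hpowsplit]
      field_simp
    rw [hrw]
    have hnum : 0 ≤ 1 - s + θ*(1-θ) := by nlinarith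
    have hfrac : (1 - s + θ*(1-θ)) / (1-s) ≥ 0 := div_nonneg hnum hs1.le
    calc (Real.exp s * (1-s))^k * ((1 - s + θ*(1-θ)) / (1-s))
        ≤ (1/(1 + K*a)) * ((1 - s + θ*(1-θ)) / (1-s)) :=
          mul_le_mul_of_nonneg_right pow3 hfrac
      _ ≤ 5/4 := by
          rw [div_mul_div_comm, one_mul, div_le_div_iff₀ (by positivity) (by norm_num)]
          nlinarith [poly, hKa0]
  constructor
  · have hexp1 : 0 < Real.exp 1 := Real.exp_pos 1
    have : Real.exp (θ-1) = Real.exp θ / Real.exp 1 := by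
      rw [Real.exp_sub]
    rw [this, div_mul_eq_mul_div, div_le_div_iff₀ hexp1 (by positivity)]
    calc Real.exp θ * ((1 - s)^k + θ*(1-θ)*(1 - s)^(k-1)) * (4 * Real.exp 1)
        ≤ (5/4) * (4 * Real.exp 1) := by
          apply mul_le_mul_of_nonneg_right main (by positivity)
      _ = 5 * Real.exp 1 := by ring
  · have h9 : (2.7182818283:ℝ) < Real.exp 1 := Real.exp_one_gt_d9
    rw [div_lt_iff₀ (by positivity)]
    nlinarith
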